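/- arXiv:1008.3650 — 3 statements merged into one kernel-verified Lean document; each statement's English description precedes it below -/
import Mathlib

section
/- Let τ be any stopping time with t ≤ τ ≤ T a.s. Then E^{Q̃}[e^{−rτ} c_τ | F_t] = E^{Q̃}[e^{−rτ} p_τ | F_t] + e^{−rt} S_t − K e^{−rT} almost surely. Consequently, a stopping time τ* valued in [t,T] minimizes τ ↦ E^{Q̃}[e^{−rτ} c_τ] over all such stopping times if and only if it minimizes τ ↦ E^{Q̃}[e^{−rτ} p_τ]; i.e., the buyer's optimal purchase strategies for a European call and a European put with the same underlying, strike and maturity are identical. -/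
open MeasureTheory Filter Set

/-- **Put–call parity for the purchase-timing problem (Proposition 2.1).**
On a filtered probability space `(Ω, F, (F_t), Q̃)`, let `S` be a stock whose
discounted value is a `Q̃`-martingale (expressed through the optional sampling
identity `E^{Q̃}[e^{−rτ} S_τ | F_t] = e^{−rt} S_t` for stopping times
`t ≤ τ ≤ T`), and let `c`, `p` be call and put price processes satisfying the
model-free put–call parity `c_u − p_u = S_u − K e^{−r(T−u)}`.  Then for every
stopping time `τ` with `t ≤ τ ≤ T`,
`E^{Q̃}[e^{−rτ} c_τ | F_t] = E^{Q̃}[e^{−rτ} p_τ | F_t] + e^{−rt} S_t − K e^{−rT}`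
a.s.; consequently a stopping time `τ*` valued in `[t,T]` minimizes
`τ ↦ E^{Q̃}[e^{−rτ} c_τ]` over all such stopping times iff it minimizes
`τ ↦ E^{Q̃}[e^{−rτ} p_τ]`: the buyer's optimal purchase strategies for a
European call and a European put with the same underlying, strike and maturity
are identical. -/
theorem optimal_purchase_put_call_parity
    {Ω : Type*} {m0 : MeasurableSpace Ω} (μ : Measure Ω) [IsProbabilityMeasure μ]
    (ℱ : Filtration ℝ m0) (T r K t : ℝ)
    (hT : 0 < T) (hr : 0 ≤ r) (hK : 0 < K) (ht : t ∈ Set.Icc (0 : ℝ) T)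
    (S c p : ℝ → Ω → ℝ)
    (parity : ∀ᵐ ω ∂μ, ∀ u ∈ Set.Icc (0 : ℝ) T,
      c u ω - p u ω = S u ω - K * Real.exp (-(r * (T - u))))
    (hS : ∀ τ : Ω → ℝ, IsStoppingTime ℱ (fun ω => (τ ω : WithTop ℝ)) → (∀ ω, τ ω ∈ Set.Icc t T) →
      μ[fun ω => Real.exp (-(r * τ ω)) * S (τ ω) ω | ℱ t]
        =ᵐ[μ] fun ω => Real.exp (-(r * t)) * S t ω)
    (hSint : ∀ τ : Ω → ℝ, IsStoppingTime ℱ (fun ω => (τ ω : WithTop ℝ)) → (∀ ω, τ ω ∈ Set.Icc t T) →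
      Integrable (fun ω => Real.exp (-(r * τ ω)) * S (τ ω) ω) μ)
    (hcint : ∀ τ : Ω → ℝ, IsStoppingTime ℱ (fun ω => (τ ω : WithTop ℝ)) → (∀ ω, τ ω ∈ Set.Icc t T) →
      Integrable (fun ω => Real.exp (-(r * τ ω)) * c (τ ω) ω) μ)
    (hpint : ∀ τ : Ω → ℝ, IsStoppingTime ℱ (fun ω => (τ ω : WithTop ℝ)) → (∀ ω, τ ω ∈ Set.Icc t T) →
      Integrable (fun ω => Real.exp (-(r * τ ω)) * p (τ ω) ω) μ) :
    (∀ τ : Ω → ℝ, IsStoppingTime ℱ (fun ω => (τ ω : WithTop ℝ)) → (∀ ω, τ ω ∈ Set.Icc t T) →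
      μ[fun ω => Real.exp (-(r * τ ω)) * c (τ ω) ω | ℱ t]
        =ᵐ[μ] fun ω =>
          (μ[fun ω' => Real.exp (-(r * τ ω')) * p (τ ω') ω' | ℱ t]) ω
            + Real.exp (-(r * t)) * S t ω - K * Real.exp (-(r * T)))
    ∧ (∀ τstar : Ω → ℝ, IsStoppingTime ℱ (fun ω => (τstar ω : WithTop ℝ)) → (∀ ω, τstar ω ∈ Set.Icc t T) →
        ((∀ τ : Ω → ℝ, IsStoppingTime ℱ (fun ω => (τ ω : WithTop ℝ)) → (∀ ω, τ ω ∈ Set.Icc t T) →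
            ∫ ω, Real.exp (-(r * τstar ω)) * c (τstar ω) ω ∂μ
              ≤ ∫ ω, Real.exp (-(r * τ ω)) * c (τ ω) ω ∂μ)
          ↔ (∀ τ : Ω → ℝ, IsStoppingTime ℱ (fun ω => (τ ω : WithTop ℝ)) → (∀ ω, τ ω ∈ Set.Icc t T) →
            ∫ ω, Real.exp (-(r * τstar ω)) * p (τstar ω) ω ∂μ
              ≤ ∫ ω, Real.exp (-(r * τ ω)) * p (τ ω) ω ∂μ))) := by
  have key : ∀ τ : Ω → ℝ, (∀ ω, τ ω ∈ Set.Icc t T) →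
      (fun ω => Real.exp (-(r * τ ω)) * c (τ ω) ω)
        =ᵐ[μ] fun ω => Real.exp (-(r * τ ω)) * p (τ ω) ω
          + (Real.exp (-(r * τ ω)) * S (τ ω) ω - K * Real.exp (-(r * T))) := by
    intro τ hτ
    filter_upwards [parity] with ω hω
    have hmem : τ ω ∈ Set.Icc (0 : ℝ) T := ⟨le_trans ht.1 (hτ ω).1, (hτ ω).2⟩
    have h := hω (τ ω) hmem
    have hexp : Real.exp (-(r * τ ω)) * Real.exp (-(r * (T - τ ω)))
        = Real.exp (-(r * T)) := by
      rw [← Real.exp_add]; ring_nf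
    have h' : c (τ ω) ω = p (τ ω) ω + (S (τ ω) ω - K * Real.exp (-(r * (T - τ ω)))) := by
      linarith
    rw [h']
    rw [mul_add, mul_sub, ← mul_assoc, mul_comm (Real.exp (-(r * τ ω))) K,
      mul_assoc, hexp]
  have part1 : ∀ τ : Ω → ℝ, IsStoppingTime ℱ (fun ω => (τ ω : WithTop ℝ)) → (∀ ω, τ ω ∈ Set.Icc t T) →
      μ[fun ω => Real.exp (-(r * τ ω)) * c (τ ω) ω | ℱ t]
        =ᵐ[μ] fun ω =>
          (μ[fun ω' => Real.exp (-(r * τ ω')) * p (τ ω') ω' | ℱ t]) ω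
            + Real.exp (-(r * t)) * S t ω - K * Real.exp (-(r * T)) := by
    intro τ hst hτ
    have hi2 : Integrable
        (fun ω => Real.exp (-(r * τ ω)) * S (τ ω) ω - K * Real.exp (-(r * T))) μ :=
      (hSint τ hst hτ).sub (integrable_const _)
    have e1 := condExp_congr_ae (m := ℱ t) (μ := μ) (key τ hτ)
    have e2 : μ[fun ω => Real.exp (-(r * τ ω)) * p (τ ω) ω
          + (Real.exp (-(r * τ ω)) * S (τ ω) ω - K * Real.exp (-(r * T))) | ℱ t]
        =ᵐ[μ] (μ[fun ω => Real.exp (-(r * τ ω)) * p (τ ω) ω | ℱ t])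
          + (μ[fun ω => Real.exp (-(r * τ ω)) * S (τ ω) ω - K * Real.exp (-(r * T)) | ℱ t]) :=
      condExp_add (hpint τ hst hτ) hi2 _
    have e3 : μ[fun ω => Real.exp (-(r * τ ω)) * S (τ ω) ω - K * Real.exp (-(r * T)) | ℱ t]
        =ᵐ[μ] (μ[fun ω => Real.exp (-(r * τ ω)) * S (τ ω) ω | ℱ t])
          - (μ[fun _ : Ω => K * Real.exp (-(r * T)) | ℱ t]) :=
      condExp_sub (hSint τ hst hτ) (integrable_const _) _
    have e4 := hS τ hst hτ
    have e5 : μ[(fun _ : Ω => K * Real.exp (-(r * T))) | ℱ t]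
        = fun _ => K * Real.exp (-(r * T)) := condExp_const (ℱ.le t) _
    filter_upwards [e1, e2, e3, e4] with ω h1 h2 h3 h4
    rw [h1, h2]
    simp only [Pi.add_apply, Pi.sub_apply] at h3 ⊢
    rw [h3, h4, e5]
    ring
  refine ⟨part1, ?_⟩
  have hC : ∀ τ : Ω → ℝ, IsStoppingTime ℱ (fun ω => (τ ω : WithTop ℝ)) → (∀ ω, τ ω ∈ Set.Icc t T) →
      ∫ ω, Real.exp (-(r * τ ω)) * S (τ ω) ω ∂μ
        = ∫ ω, Real.exp (-(r * t)) * S t ω ∂μ := by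
    intro τ hst hτ
    rw [← integral_condExp (ℱ.le t) (f := fun ω => Real.exp (-(r * τ ω)) * S (τ ω) ω)]
    exact integral_congr_ae (hS τ hst hτ)
  have heq : ∀ τ : Ω → ℝ, IsStoppingTime ℱ (fun ω => (τ ω : WithTop ℝ)) → (∀ ω, τ ω ∈ Set.Icc t T) →
      ∫ ω, Real.exp (-(r * τ ω)) * c (τ ω) ω ∂μ
        = ∫ ω, Real.exp (-(r * τ ω)) * p (τ ω) ω ∂μ
          + ((∫ ω, Real.exp (-(r * t)) * S t ω ∂μ) - K * Real.exp (-(r * T))) := by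
    intro τ hst hτ
    have hi2 : Integrable
        (fun ω => Real.exp (-(r * τ ω)) * S (τ ω) ω - K * Real.exp (-(r * T))) μ :=
      (hSint τ hst hτ).sub (integrable_const _)
    rw [integral_congr_ae (key τ hτ), integral_add (hpint τ hst hτ) hi2,
      integral_sub (hSint τ hst hτ) (integrable_const _), integral_const,
      hC τ hst hτ]
    simp
  intro τstar hsts hτs
  constructor
  · intro h τ hst hτ
    have := h τ hst hτ
    rw [heq τstar hsts hτs, heq τ hst hτ] at this
    linarith
  · intro h τ hst hτ
    have := h τ hst hτ
    rw [heq τstar hsts hτs, heq τ hst hτ]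
    linarith
end

section
/- For every stopping time τ with values in [0,T], the concatenated process Z^τ_t := Z^b_t·1_{[0,τ)}(t) + (Z^m_t · Z^b_τ / Z^m_τ)·1_{[τ,T]}(t), 0 ≤ t ≤ T, is a strictly positive martingale with respect to (F_t) under P, with Z^τ_0 = Z^b_0. -/
open MeasureTheory Filter Set
open Topology

/-- The concatenation of the density processes `Z^b` and `Z^m` at the stopping
time `τ`:  `Z^τ_t = Z^b_t·1_{[0,τ)}(t) + (Z^m_t · Z^b_τ / Z^m_τ)·1_{[τ,T]}(t)`. -/
noncomputable def concatDensity {Ω : Type*} (Zm Zb : ℝ → Ω → ℝ) (τ : Ω → ℝ) :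
    ℝ → Ω → ℝ :=
  fun u ω => if u < τ ω then Zb u ω else Zm u ω * Zb (τ ω) ω / Zm (τ ω) ω

lemma withTop_untopA_coe_real (x : ℝ) : ((x : WithTop ℝ)).untopA = x := rfl

lemma aux_meas_comp {α Ω : Type*} [mα : MeasurableSpace α] [mΩ : MeasurableSpace Ω]
    (g : α → ℝ) (hg : Measurable g) {S : Set ℝ} (hS : S.Countable) (hrange : ∀ a, g a ∈ S)
    (u : ℝ → Ω → ℝ) (hu : ∀ q ∈ S, Measurable (u q)) :
    Measurable fun p : α × Ω => u (g p.1) p.2 := by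
  intro B hB
  have hset : (fun p : α × Ω => u (g p.1) p.2) ⁻¹' B
      = ⋃ q ∈ S, ((fun p : α × Ω => g p.1) ⁻¹' {q} ∩ {p : α × Ω | u q p.2 ∈ B}) := by
    ext p
    simp only [Set.mem_preimage, Set.mem_iUnion, Set.mem_inter_iff, Set.mem_setOf_eq,
      Set.mem_singleton_iff]
    constructor
    · intro h; exact ⟨g p.1, hrange p.1, rfl, h⟩
    · rintro ⟨q, hq, hgq, h⟩; rw [hgq]; exact h
  rw [hset]
  refine MeasurableSet.biUnion hS fun q hq => MeasurableSet.inter ?_ ?_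
  · exact (hg.comp measurable_fst) (measurableSet_singleton q)
  · exact measurable_snd ((hu q hq) hB)

lemma progMeasurable_of_rightContinuous
    {Ω : Type*} {m0 : MeasurableSpace Ω} (ℱ : Filtration ℝ m0) (u : ℝ → Ω → ℝ)
    (hadp : Adapted ℱ u)
    (hrc : ∀ ω t, ContinuousWithinAt (fun v => u v ω) (Set.Ici t) t) :
    ProgMeasurable ℱ u := by
  intro i
  have h2 : ∀ n : ℕ, (0 : ℝ) < 2 ^ n := fun n => by positivity
  set g : ℕ → ℝ → ℝ := fun n t => min i ((⌈t * 2 ^ n⌉ : ℝ) / 2 ^ n) with hgdef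
  have hg_le : ∀ (n : ℕ) (t : ℝ), t ≤ i → t ≤ g n t := by
    intro n t ht
    refine le_min ht ?_
    rw [le_div_iff₀ (h2 n)]
    exact Int.le_ceil _
  have hg_lei : ∀ (n : ℕ) (t : ℝ), g n t ≤ i := fun n t => min_le_left _ _
  have hg_ub : ∀ (n : ℕ) (t : ℝ), g n t ≤ t + ((2 : ℝ) ^ n)⁻¹ := by
    intro n t
    refine (min_le_right _ _).trans ?_
    rw [div_le_iff₀ (h2 n)]
    have hc := Int.ceil_lt_add_one (t * 2 ^ n)
    have hexp : (t + ((2:ℝ) ^ n)⁻¹) * 2 ^ n = t * 2 ^ n + 1 := by field_simp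
    linarith
  have hg_mono : ∀ n : ℕ, Monotone (g n) := by
    intro n
    refine monotone_const.min ?_
    intro a b hab
    have hcc : (⌈a * 2 ^ n⌉ : ℝ) ≤ (⌈b * 2 ^ n⌉ : ℝ) := by
      exact_mod_cast Int.ceil_le_ceil (mul_le_mul_of_nonneg_right hab (h2 n).le)
    show (⌈a * 2 ^ n⌉ : ℝ) / 2 ^ n ≤ (⌈b * 2 ^ n⌉ : ℝ) / 2 ^ n
    gcongr
  -- countable value sets
  set S : ℕ → Set ℝ := fun n => insert i ((Set.range fun k : ℤ => (k : ℝ) / 2 ^ n) ∩ Set.Iic i)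
    with hSdef
  have hS_count : ∀ n, (S n).Countable :=
    fun n => (Set.countable_range _).mono Set.inter_subset_left |>.insert i
  have hS_mem : ∀ (n : ℕ) (t : ℝ), g n t ∈ S n := by
    intro n t
    rcases min_cases i ((⌈t * 2 ^ n⌉ : ℝ) / 2 ^ n) with ⟨h, hle⟩ | ⟨h, hlt⟩
    · rw [hgdef]; simp only; rw [h]; exact Set.mem_insert _ _
    · rw [hgdef]; simp only; rw [h]
      exact Set.mem_insert_of_mem _ ⟨⟨⌈t * 2 ^ n⌉, rfl⟩, le_of_lt hlt⟩
  have hS_le : ∀ (n : ℕ), ∀ q ∈ S n, q ≤ i := by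
    intro n q hq
    rcases hq with rfl | ⟨_, hle⟩
    · exact le_rfl
    · exact hle
  -- the approximating processes on `Iic i × Ω`
  set V : ℕ → Set.Iic i × Ω → ℝ := fun n p => u (g n (p.1 : ℝ)) p.2 with hVdef
  have hV_meas : ∀ n, Measurable[Subtype.instMeasurableSpace.prod (ℱ i)] (V n) := by
    intro n
    exact aux_meas_comp (mΩ := ℱ i) (fun t : Set.Iic i => g n (t : ℝ))
      ((hg_mono n).measurable.comp measurable_subtype_coe) (hS_count n)
      (fun a => hS_mem n a) u
      (fun q hq => ((hadp q).mono (ℱ.mono (hS_le n q hq)) le_rfl))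
  have hV_tendsto : ∀ p : Set.Iic i × Ω,
      Tendsto (fun n => V n p) atTop (𝓝 (u (p.1 : ℝ) p.2)) := by
    rintro ⟨⟨t, ht⟩, ω⟩
    have ht' : t ≤ i := ht
    have h1 : Tendsto (fun n : ℕ => g n t) atTop (𝓝 t) := by
      have hupper : Tendsto (fun n : ℕ => t + ((2 : ℝ) ^ n)⁻¹) atTop (𝓝 (t + 0)) := by
        exact tendsto_const_nhds.add
          ((tendsto_pow_atTop_atTop_of_one_lt (by norm_num : (1:ℝ) < 2)).inv_tendsto_atTop)
      rw [add_zero] at hupper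
      exact tendsto_of_tendsto_of_tendsto_of_le_of_le tendsto_const_nhds hupper
        (fun n => hg_le n t ht') (fun n => hg_ub n t)
    have h2 : Tendsto (fun n : ℕ => g n t) atTop (𝓝[Set.Ici t] t) :=
      tendsto_nhdsWithin_of_tendsto_nhds_of_eventually_within _ h1
        (Eventually.of_forall fun n => hg_le n t ht')
    exact (hrc ω t).tendsto.comp h2
  exact stronglyMeasurable_of_tendsto (m := Subtype.instMeasurableSpace.prod (ℱ i)) atTop
    (fun n => (hV_meas n).stronglyMeasurable) (tendsto_pi_nhds.2 hV_tendsto)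

/-- **The concatenated density process is a strictly positive martingale.**
Let `Z^m`, `Z^b` be strictly positive, right-continuous, uniformly integrable
martingales satisfying the optional sampling identity, with suitable
integrability of `Z^m_t · Z^b_τ / Z^m_τ`.  Then for every stopping time `τ`
valued in `[0,T]`, the concatenated process
`Z^τ_t = Z^b_t·1_{[0,τ)}(t) + (Z^m_t · Z^b_τ / Z^m_τ)·1_{[τ,T]}(t)` is a
strictly positive `(F_t)`-martingale on `[0,T]` under `P`, with
`Z^τ_0 = Z^b_0`. -/
theorem concatDensity_martingale
    {Ω : Type*} {m0 : MeasurableSpace Ω} (μ : Measure Ω) [IsProbabilityMeasure μ]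
    (ℱ : Filtration ℝ m0) (T : ℝ) (hT : 0 < T)
    (Zm Zb : ℝ → Ω → ℝ)
    (hZm : Martingale Zm ℱ μ) (hZb : Martingale Zb ℱ μ)
    (hZmUI : UniformIntegrable Zm 1 μ) (hZbUI : UniformIntegrable Zb 1 μ)
    (hZmpos : ∀ᵐ ω ∂μ, ∀ u : ℝ, 0 < Zm u ω)
    (hZbpos : ∀ᵐ ω ∂μ, ∀ u : ℝ, 0 < Zb u ω)
    (hZmrc : ∀ ω : Ω, ∀ u : ℝ, ContinuousWithinAt (fun v => Zm v ω) (Set.Ici u) u)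
    (hZbrc : ∀ ω : Ω, ∀ u : ℝ, ContinuousWithinAt (fun v => Zb v ω) (Set.Ici u) u)
    (hosm : ∀ (σ : Ω → ℝ) (hσ : IsStoppingTime ℱ (fun ω => (σ ω : WithTop ℝ))), (∀ ω, σ ω ∈ Set.Icc 0 T) →
      μ[Zm T | hσ.measurableSpace] =ᵐ[μ] fun ω => Zm (σ ω) ω)
    (hosb : ∀ (σ : Ω → ℝ) (hσ : IsStoppingTime ℱ (fun ω => (σ ω : WithTop ℝ))), (∀ ω, σ ω ∈ Set.Icc 0 T) →
      μ[Zb T | hσ.measurableSpace] =ᵐ[μ] fun ω => Zb (σ ω) ω)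
    (τ : Ω → ℝ) (hτ : IsStoppingTime ℱ (fun ω => (τ ω : WithTop ℝ))) (hτT : ∀ ω, τ ω ∈ Set.Icc 0 T)
    (hint : ∀ u ∈ Set.Icc (0 : ℝ) T,
      Integrable (fun ω => Zm u ω * Zb (τ ω) ω / Zm (τ ω) ω) μ) :
    (∀ u ∈ Set.Icc (0 : ℝ) T,
        Integrable (concatDensity Zm Zb τ u) μ
          ∧ StronglyMeasurable[ℱ u] (concatDensity Zm Zb τ u))
    ∧ (∀ s u : ℝ, 0 ≤ s → s ≤ u → u ≤ T →
        μ[concatDensity Zm Zb τ u | ℱ s] =ᵐ[μ] concatDensity Zm Zb τ s)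
    ∧ (∀ u ∈ Set.Icc (0 : ℝ) T, ∀ᵐ ω ∂μ, 0 < concatDensity Zm Zb τ u ω)
    ∧ concatDensity Zm Zb τ 0 =ᵐ[μ] Zb 0 := by
  have hτ0 : ∀ ω, 0 ≤ τ ω := fun ω => (hτT ω).1
  have hτle : ∀ ω, τ ω ≤ T := fun ω => (hτT ω).2
  have hτms : ∀ t : ℝ, MeasurableSet[ℱ t] {ω | τ ω ≤ t} := fun t => by
    simpa only [WithTop.coe_le_coe] using hτ.measurableSet_le t
  have progm : ProgMeasurable ℱ Zm := progMeasurable_of_rightContinuous ℱ Zm hZm.stronglyAdapted.adapted hZmrc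
  have progb : ProgMeasurable ℱ Zb := progMeasurable_of_rightContinuous ℱ Zb hZb.stronglyAdapted.adapted hZbrc
  -- strong measurability
  have hmeas : ∀ t : ℝ, StronglyMeasurable[ℱ t] (concatDensity Zm Zb τ t) := by
    intro t
    have hAt : MeasurableSet[ℱ t] {ω | τ ω ≤ t} := hτms t
    have hsb : StronglyMeasurable[ℱ t] (stoppedValue Zb fun ω => min (τ ω) t) :=
      stronglyMeasurable_stoppedValue_of_le progb (hτ.min_const t) fun _ => min_le_right _ _
    have hsm : StronglyMeasurable[ℱ t] (stoppedValue Zm fun ω => min (τ ω) t) :=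
      stronglyMeasurable_stoppedValue_of_le progm (hτ.min_const t) fun _ => min_le_right _ _
    have heq : concatDensity Zm Zb τ t =
        fun ω => Set.indicator {ω | τ ω ≤ t}ᶜ (Zb t) ω
          + Set.indicator {ω | τ ω ≤ t} (fun ω => Zm t ω *
              stoppedValue Zb (fun ω => min (τ ω) t) ω /
              stoppedValue Zm (fun ω => min (τ ω) t) ω) ω := by
      funext ω
      by_cases h : τ ω ≤ t
      · have hmem : ω ∈ {ω | τ ω ≤ t} := h
        have hnc : ω ∉ {ω | τ ω ≤ t}ᶜ := fun hc => hc hmem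
        rw [Set.indicator_of_notMem hnc, Set.indicator_of_mem hmem, zero_add]
        show (if t < τ ω then Zb t ω else Zm t ω * Zb (τ ω) ω / Zm (τ ω) ω) = _
        rw [if_neg (not_lt.mpr h)]
        simp only [stoppedValue, min_eq_left (WithTop.coe_le_coe.mpr h), withTop_untopA_coe_real]
      · have hnm : ω ∉ {ω | τ ω ≤ t} := h
        have hcm : ω ∈ {ω | τ ω ≤ t}ᶜ := hnm
        rw [Set.indicator_of_mem hcm, Set.indicator_of_notMem hnm, add_zero]
        show (if t < τ ω then Zb t ω else Zm t ω * Zb (τ ω) ω / Zm (τ ω) ω) = _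
        rw [if_pos (not_le.mp h)]
    rw [heq]
    exact ((hZb.stronglyAdapted t).indicator hAt.compl).add
      ((((hZm.stronglyAdapted t).measurable.mul hsb.measurable).div
        hsm.measurable).indicator hAt).stronglyMeasurable
  -- integrability
  have hIntEq : ∀ t : ℝ, concatDensity Zm Zb τ t =
      fun ω => Set.indicator {ω | τ ω ≤ t}ᶜ (Zb t) ω
        + Set.indicator {ω | τ ω ≤ t} (fun ω => Zm t ω * Zb (τ ω) ω / Zm (τ ω) ω) ω := by
    intro t
    funext ω
    by_cases h : τ ω ≤ t
    · have hmem : ω ∈ {ω | τ ω ≤ t} := h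
      have hnc : ω ∉ {ω | τ ω ≤ t}ᶜ := fun hc => hc hmem
      rw [Set.indicator_of_notMem hnc, Set.indicator_of_mem hmem, zero_add]
      show (if t < τ ω then Zb t ω else Zm t ω * Zb (τ ω) ω / Zm (τ ω) ω) = _
      rw [if_neg (not_lt.mpr h)]
    · have hnm : ω ∉ {ω | τ ω ≤ t} := h
      have hcm : ω ∈ {ω | τ ω ≤ t}ᶜ := hnm
      rw [Set.indicator_of_mem hcm, Set.indicator_of_notMem hnm, add_zero]
      show (if t < τ ω then Zb t ω else Zm t ω * Zb (τ ω) ω / Zm (τ ω) ω) = _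
      rw [if_pos (not_le.mp h)]
  have hInt : ∀ t ∈ Set.Icc (0:ℝ) T, Integrable (concatDensity Zm Zb τ t) μ := by
    intro t ht
    have hAt : MeasurableSet {ω | τ ω ≤ t} := ℱ.le t _ (hτms t)
    rw [hIntEq t]
    exact ((hZb.integrable t).indicator hAt.compl).add ((hint t ht).indicator hAt)
  refine ⟨fun t ht => ⟨hInt t ht, hmeas t⟩, ?_, ?_, ?_⟩
  · -- martingale property
    intro s u hs0 hsu huT
    have hsT : s ∈ Set.Icc (0:ℝ) T := ⟨hs0, hsu.trans huT⟩
    have huTmem : u ∈ Set.Icc (0:ℝ) T := ⟨hs0.trans hsu, huT⟩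
    set X : Ω → ℝ := fun ω => Zb (τ ω) ω / Zm (τ ω) ω with hX
    set σ : Ω → ℝ := fun ω => min (τ ω) u with hσdef
    have hσ : IsStoppingTime ℱ (fun ω => (σ ω : WithTop ℝ)) := hτ.min_const u
    have hσ_le_u : ∀ ω, σ ω ≤ u := fun ω => min_le_right _ _
    have hmσ_le_u : hσ.measurableSpace ≤ ℱ u := hσ.measurableSpace_le_of_le_const (fun ω => WithTop.coe_le_coe.mpr (hσ_le_u ω))
    have hmσ : hσ.measurableSpace ≤ m0 := hmσ_le_u.trans (ℱ.le u)
    have hσmem : ∀ ω, σ ω ∈ Set.Icc 0 T :=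
      fun ω => ⟨le_min (hτ0 ω) (hs0.trans hsu), (hσ_le_u ω).trans huT⟩
    have keym : μ[Zm u|hσ.measurableSpace] =ᵐ[μ] fun ω => Zm (σ ω) ω := by
      calc μ[Zm u|hσ.measurableSpace]
          =ᵐ[μ] μ[μ[Zm T|ℱ u]|hσ.measurableSpace] :=
            condExp_congr_ae (hZm.condExp_ae_eq huT).symm
        _ =ᵐ[μ] μ[Zm T|hσ.measurableSpace] := condExp_condExp_of_le hmσ_le_u (ℱ.le u)
        _ =ᵐ[μ] fun ω => Zm (σ ω) ω := hosm σ hσ hσmem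
    have keyb : μ[Zb u|hσ.measurableSpace] =ᵐ[μ] fun ω => Zb (σ ω) ω := by
      calc μ[Zb u|hσ.measurableSpace]
          =ᵐ[μ] μ[μ[Zb T|ℱ u]|hσ.measurableSpace] :=
            condExp_congr_ae (hZb.condExp_ae_eq huT).symm
        _ =ᵐ[μ] μ[Zb T|hσ.measurableSpace] := condExp_condExp_of_le hmσ_le_u (ℱ.le u)
        _ =ᵐ[μ] fun ω => Zb (σ ω) ω := hosb σ hσ hσmem
    refine (ae_eq_condExp_of_forall_setIntegral_eq (ℱ.le s) (hInt u huTmem)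
      (fun A hA _ => (hInt s hsT).integrableOn)
      (fun A hA _ => ?_) ((hmeas s).aestronglyMeasurable)).symm
    -- goal : ∫ ω in A, Zc s = ∫ ω in A, Zc u
    have hAm0 : MeasurableSet A := ℱ.le s _ hA
    have hTs : MeasurableSet {ω | τ ω ≤ s} := ℱ.le s _ (hτms s)
    have hTu : MeasurableSet {ω | τ ω ≤ u} := ℱ.le u _ (hτms u)
    set B := A ∩ {ω | τ ω ≤ s} with hBdef
    set C := A ∩ {ω | τ ω ≤ s}ᶜ with hCdef
    set D := C ∩ {ω | τ ω ≤ u} with hDdef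
    set E := C ∩ {ω | τ ω ≤ u}ᶜ with hEdef
    have hBm : MeasurableSet B := hAm0.inter hTs
    have hCm : MeasurableSet C := hAm0.inter hTs.compl
    have hDm : MeasurableSet D := hCm.inter hTu
    have hEm : MeasurableSet E := hCm.inter hTu.compl
    have hBC : Disjoint B C :=
      disjoint_compl_right.mono Set.inter_subset_right Set.inter_subset_right
    have hDE : Disjoint D E :=
      disjoint_compl_right.mono Set.inter_subset_right Set.inter_subset_right
    have hABC : B ∪ C = A := Set.inter_union_compl A _
    have hDEC : D ∪ E = C := Set.inter_union_compl C _
    -- pointwise identifications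
    have hZcs_B : ∀ ω ∈ B, concatDensity Zm Zb τ s ω = Zm s ω * X ω := by
      rintro ω ⟨-, h⟩
      have h' : τ ω ≤ s := h
      show (if s < τ ω then Zb s ω else Zm s ω * Zb (τ ω) ω / Zm (τ ω) ω) = _
      rw [if_neg (not_lt.mpr h'), mul_div_assoc]
    have hZcu_B : ∀ ω ∈ B, concatDensity Zm Zb τ u ω = Zm u ω * X ω := by
      rintro ω ⟨-, h⟩
      have h' : τ ω ≤ u := le_trans h hsu
      show (if u < τ ω then Zb u ω else Zm u ω * Zb (τ ω) ω / Zm (τ ω) ω) = _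
      rw [if_neg (not_lt.mpr h'), mul_div_assoc]
    have hZcs_C : ∀ ω ∈ C, concatDensity Zm Zb τ s ω = Zb s ω := by
      rintro ω ⟨-, h⟩
      have h' : ¬ τ ω ≤ s := h
      show (if s < τ ω then Zb s ω else Zm s ω * Zb (τ ω) ω / Zm (τ ω) ω) = _
      rw [if_pos (not_le.mp h')]
    have hZcu_D : ∀ ω ∈ D, concatDensity Zm Zb τ u ω = Zm u ω * X ω := by
      rintro ω ⟨-, h⟩
      have h' : τ ω ≤ u := h
      show (if u < τ ω then Zb u ω else Zm u ω * Zb (τ ω) ω / Zm (τ ω) ω) = _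
      rw [if_neg (not_lt.mpr h'), mul_div_assoc]
    have hZcu_E : ∀ ω ∈ E, concatDensity Zm Zb τ u ω = Zb u ω := by
      rintro ω ⟨-, h⟩
      have h' : ¬ τ ω ≤ u := h
      show (if u < τ ω then Zb u ω else Zm u ω * Zb (τ ω) ω / Zm (τ ω) ω) = _
      rw [if_pos (not_le.mp h')]
    -- part (a): the integral over B
    have hsb : StronglyMeasurable[ℱ s] (stoppedValue Zb fun ω => min (τ ω) s) :=
      stronglyMeasurable_stoppedValue_of_le progb (hτ.min_const s) fun _ => min_le_right _ _
    have hsm : StronglyMeasurable[ℱ s] (stoppedValue Zm fun ω => min (τ ω) s) :=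
      stronglyMeasurable_stoppedValue_of_le progm (hτ.min_const s) fun _ => min_le_right _ _
    set f1 : Ω → ℝ := B.indicator (fun ω => stoppedValue Zb (fun ω => min (τ ω) s) ω /
      stoppedValue Zm (fun ω => min (τ ω) s) ω) with hf1def
    have hf1meas : StronglyMeasurable[ℱ s] f1 :=
      ((hsb.measurable.div hsm.measurable).indicator
        (hA.inter (hτms s))).stronglyMeasurable
    have hf1B : ∀ (t : ℝ) (ω : Ω),
        B.indicator (fun ω => Zm t ω * X ω) ω = f1 ω * Zm t ω := by
      intro t ω
      by_cases hω : ω ∈ B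
      · rw [Set.indicator_of_mem hω, hf1def, Set.indicator_of_mem hω]
        have hts : τ ω ≤ s := hω.2
        simp only [stoppedValue, min_eq_left (WithTop.coe_le_coe.mpr hts), withTop_untopA_coe_real, hX]
        ring
      · rw [Set.indicator_of_notMem hω, hf1def, Set.indicator_of_notMem hω, zero_mul]
    have hint_f1 : ∀ t ∈ Set.Icc (0:ℝ) T, Integrable (fun ω => f1 ω * Zm t ω) μ := by
      intro t ht
      have h1 : (fun ω => f1 ω * Zm t ω) = B.indicator (fun ω => Zm t ω * X ω) :=
        funext fun ω => (hf1B t ω).symm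
      have h2 : (fun ω => Zm t ω * X ω) = fun ω => Zm t ω * Zb (τ ω) ω / Zm (τ ω) ω :=
        funext fun ω => (mul_div_assoc _ _ _).symm
      rw [h1, h2]
      exact (hint t ht).indicator hBm
    have step_a : ∀ t : ℝ, s ≤ t → t ≤ T →
        ∫ ω in B, Zm t ω * X ω ∂μ = ∫ ω, f1 ω * Zm s ω ∂μ := by
      intro t hst htT
      have h1 : ∫ ω in B, Zm t ω * X ω ∂μ = ∫ ω, f1 ω * Zm t ω ∂μ := by
        rw [← integral_indicator hBm]
        exact integral_congr_ae (Eventually.of_forall fun ω => hf1B t ω)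
      rw [h1, ← integral_condExp (ℱ.le s) (f := fun ω => f1 ω * Zm t ω)]
      refine integral_congr_ae ?_
      have hpull : μ[(fun ω => f1 ω * Zm t ω)|ℱ s] =ᵐ[μ] f1 * μ[Zm t|ℱ s] :=
        condExp_mul_of_stronglyMeasurable_left hf1meas (hint_f1 t ⟨hs0.trans hst, htT⟩)
          (hZm.integrable t)
      filter_upwards [hpull, hZm.condExp_ae_eq hst] with ω h1 h2
      rw [h1, Pi.mul_apply, h2]
    have hBa : ∫ ω in B, concatDensity Zm Zb τ u ω ∂μ
        = ∫ ω in B, concatDensity Zm Zb τ s ω ∂μ := by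
      calc ∫ ω in B, concatDensity Zm Zb τ u ω ∂μ
          = ∫ ω in B, Zm u ω * X ω ∂μ :=
            setIntegral_congr_ae hBm (Eventually.of_forall fun ω hω => hZcu_B ω hω)
        _ = ∫ ω, f1 ω * Zm s ω ∂μ := step_a u hsu huT
        _ = ∫ ω in B, Zm s ω * X ω ∂μ := (step_a s le_rfl hsT.2).symm
        _ = ∫ ω in B, concatDensity Zm Zb τ s ω ∂μ :=
            (setIntegral_congr_ae hBm (Eventually.of_forall fun ω hω => hZcs_B ω hω)).symm
    -- part (b): the integral over D
    have hD_mσ : MeasurableSet[hσ.measurableSpace] D := by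
      refine (hσ.measurableSet D).mpr ⟨le_iSup (fun t => (ℱ t : MeasurableSpace Ω)) u _
        (((ℱ.mono hsu _ hA).inter (ℱ.mono hsu _ (hτms s).compl)).inter (hτms u)), fun t => ?_⟩
      simp only [WithTop.coe_le_coe]
      by_cases htu : u ≤ t
      · have hseq : D ∩ {ω | σ ω ≤ t} = D :=
          Set.inter_eq_self_of_subset_left fun ω _ =>
            Set.mem_setOf_eq ▸ ((hσ_le_u ω).trans htu)
        rw [hseq, hDdef, hCdef]
        have hst : s ≤ t := hsu.trans htu
        exact ((ℱ.mono hst _ hA).inter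
          (ℱ.mono hst _ (hτms s).compl)).inter
          (ℱ.mono htu _ (hτms u))
      · push_neg at htu
        by_cases hts : s ≤ t
        · have hseq : D ∩ {ω | σ ω ≤ t} = (A ∩ {ω | τ ω ≤ s}ᶜ) ∩ {ω | τ ω ≤ t} := by
            ext ω
            simp only [hDdef, hCdef, hσdef, Set.mem_inter_iff, Set.mem_setOf_eq,
              Set.mem_compl_iff, min_le_iff]
            constructor
            · rintro ⟨⟨⟨hA', hs'⟩, _⟩, ht' | ht'⟩
              · exact ⟨⟨hA', hs'⟩, ht'⟩
              · exact absurd ht' (not_le.mpr htu)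
            · rintro ⟨⟨hA', hs'⟩, ht'⟩
              exact ⟨⟨⟨hA', hs'⟩, ht'.trans htu.le⟩, Or.inl ht'⟩
          rw [hseq]
          exact ((ℱ.mono hts _ hA).inter
            (ℱ.mono hts _ (hτms s).compl)).inter (hτms t)
        · push_neg at hts
          have hseq : D ∩ {ω | σ ω ≤ t} = ∅ := by
            ext ω
            simp only [hDdef, hCdef, hσdef, Set.mem_inter_iff, Set.mem_setOf_eq,
              Set.mem_compl_iff, min_le_iff, Set.mem_empty_iff_false, iff_false, not_and]
            rintro ⟨⟨_, hs'⟩, _⟩ (ht' | ht')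
            · exact hs' (ht'.trans hts.le)
            · exact absurd ht' (not_le.mpr htu)
          rw [hseq]
          exact @MeasurableSet.empty _ (ℱ t)
    set f2 : Ω → ℝ := D.indicator
      (fun ω => stoppedValue Zb (fun ω => (σ ω : WithTop ℝ)) ω / stoppedValue Zm (fun ω => (σ ω : WithTop ℝ)) ω) with hf2def
    have hf2meas : StronglyMeasurable[hσ.measurableSpace] f2 :=
      (((measurable_stoppedValue progb hσ).div
        (measurable_stoppedValue progm hσ)).indicator hD_mσ).stronglyMeasurable
    have hf2D : ∀ ω : Ω, D.indicator (fun ω => Zm u ω * X ω) ω = f2 ω * Zm u ω := by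
      intro ω
      by_cases hω : ω ∈ D
      · rw [Set.indicator_of_mem hω, hf2def, Set.indicator_of_mem hω]
        have htu' : τ ω ≤ u := hω.2
        simp only [stoppedValue, withTop_untopA_coe_real, hσdef, min_eq_left htu', hX]
        ring
      · rw [Set.indicator_of_notMem hω, hf2def, Set.indicator_of_notMem hω, zero_mul]
    have hint_f2 : Integrable (fun ω => f2 ω * Zm u ω) μ := by
      have h1 : (fun ω => f2 ω * Zm u ω) = D.indicator (fun ω => Zm u ω * X ω) :=
        funext fun ω => (hf2D ω).symm
      have h2 : (fun ω => Zm u ω * X ω) = fun ω => Zm u ω * Zb (τ ω) ω / Zm (τ ω) ω :=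
        funext fun ω => (mul_div_assoc _ _ _).symm
      rw [h1, h2]
      exact (hint u huTmem).indicator hDm
    have step_b1 : ∫ ω in D, Zm u ω * X ω ∂μ = ∫ ω in D, stoppedValue Zb (fun ω => (σ ω : WithTop ℝ)) ω ∂μ := by
      have h1 : ∫ ω in D, Zm u ω * X ω ∂μ = ∫ ω, f2 ω * Zm u ω ∂μ := by
        rw [← integral_indicator hDm]
        exact integral_congr_ae (Eventually.of_forall fun ω => hf2D ω)
      rw [h1, ← integral_condExp hmσ (f := fun ω => f2 ω * Zm u ω),
        ← integral_indicator hDm]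
      refine integral_congr_ae ?_
      have hpull : μ[(fun ω => f2 ω * Zm u ω)|hσ.measurableSpace]
          =ᵐ[μ] f2 * μ[Zm u|hσ.measurableSpace] :=
        condExp_mul_of_stronglyMeasurable_left hf2meas hint_f2 (hZm.integrable u)
      filter_upwards [hpull, keym, hZmpos] with ω h1 h2 hpos
      rw [h1, Pi.mul_apply, h2]
      by_cases hω : ω ∈ D
      · rw [hf2def, Set.indicator_of_mem hω, Set.indicator_of_mem hω]
        exact div_mul_cancel₀ _ (hpos (σ ω)).ne'
      · rw [hf2def, Set.indicator_of_notMem hω, Set.indicator_of_notMem hω, zero_mul]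
    have step_b2 : ∫ ω in D, Zb u ω ∂μ = ∫ ω in D, stoppedValue Zb (fun ω => (σ ω : WithTop ℝ)) ω ∂μ := by
      rw [← setIntegral_condExp hmσ (hZb.integrable u) hD_mσ]
      refine setIntegral_congr_ae hDm ?_
      filter_upwards [keyb] with ω h _
      exact h
    have hDb : ∫ ω in D, concatDensity Zm Zb τ u ω ∂μ = ∫ ω in D, Zb u ω ∂μ := by
      calc ∫ ω in D, concatDensity Zm Zb τ u ω ∂μ
          = ∫ ω in D, Zm u ω * X ω ∂μ :=
            setIntegral_congr_ae hDm (Eventually.of_forall fun ω hω => hZcu_D ω hω)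
        _ = ∫ ω in D, stoppedValue Zb (fun ω => (σ ω : WithTop ℝ)) ω ∂μ := step_b1
        _ = ∫ ω in D, Zb u ω ∂μ := step_b2.symm
    -- part (c): the integral over C
    have hC : MeasurableSet[ℱ s] C := hA.inter (hτms s).compl
    have hCc : ∫ ω in C, Zb s ω ∂μ = ∫ ω in C, Zb u ω ∂μ := by
      rw [← setIntegral_condExp (ℱ.le s) (hZb.integrable u) hC]
      refine setIntegral_congr_ae hCm ?_
      filter_upwards [hZb.condExp_ae_eq hsu] with ω h _
      exact h.symm
    -- assembling
    have hsplitA : ∀ f : Ω → ℝ, Integrable f μ →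
        ∫ ω in A, f ω ∂μ = ∫ ω in B, f ω ∂μ + ∫ ω in C, f ω ∂μ := by
      intro f hf
      rw [← hABC]
      exact setIntegral_union hBC hCm hf.integrableOn hf.integrableOn
    have hsplitC : ∀ f : Ω → ℝ, Integrable f μ →
        ∫ ω in C, f ω ∂μ = ∫ ω in D, f ω ∂μ + ∫ ω in E, f ω ∂μ := by
      intro f hf
      rw [← hDEC]
      exact setIntegral_union hDE hEm hf.integrableOn hf.integrableOn
    calc ∫ ω in A, concatDensity Zm Zb τ s ω ∂μ
        = ∫ ω in B, concatDensity Zm Zb τ s ω ∂μ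
          + ∫ ω in C, concatDensity Zm Zb τ s ω ∂μ :=
          hsplitA _ (hInt s hsT)
      _ = ∫ ω in B, concatDensity Zm Zb τ u ω ∂μ + ∫ ω in C, Zb s ω ∂μ := by
          rw [hBa, setIntegral_congr_ae hCm (Eventually.of_forall fun ω hω => hZcs_C ω hω)]
      _ = ∫ ω in B, concatDensity Zm Zb τ u ω ∂μ + ∫ ω in C, Zb u ω ∂μ := by rw [hCc]
      _ = ∫ ω in B, concatDensity Zm Zb τ u ω ∂μ
          + (∫ ω in D, Zb u ω ∂μ + ∫ ω in E, Zb u ω ∂μ) := by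
          rw [hsplitC _ (hZb.integrable u)]
      _ = ∫ ω in B, concatDensity Zm Zb τ u ω ∂μ
          + (∫ ω in D, concatDensity Zm Zb τ u ω ∂μ
            + ∫ ω in E, concatDensity Zm Zb τ u ω ∂μ) := by
          rw [hDb, setIntegral_congr_ae hEm (Eventually.of_forall fun ω hω => hZcu_E ω hω)]
      _ = ∫ ω in B, concatDensity Zm Zb τ u ω ∂μ
          + ∫ ω in C, concatDensity Zm Zb τ u ω ∂μ := by
          rw [← hsplitC _ (hInt u huTmem)]
      _ = ∫ ω in A, concatDensity Zm Zb τ u ω ∂μ := (hsplitA _ (hInt u huTmem)).symm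
  · -- positivity
    intro u hu
    filter_upwards [hZmpos, hZbpos] with ω hm hb
    show 0 < if u < τ ω then Zb u ω else Zm u ω * Zb (τ ω) ω / Zm (τ ω) ω
    split
    · exact hb u
    · exact div_pos (mul_pos (hm u) (hb (τ ω))) (hm (τ ω))
  · -- initial value
    filter_upwards [hZmpos] with ω hm
    show (if 0 < τ ω then Zb 0 ω else Zm 0 ω * Zb (τ ω) ω / Zm (τ ω) ω) = Zb 0 ω
    split_ifs with h
    · rfl
    · have hτ0' : τ ω = 0 := le_antisymm (not_lt.mp h) (hτ0 ω)
      rw [hτ0', mul_comm, mul_div_assoc, div_self (hm 0).ne', mul_one]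
end

section
/- For every t ∈ [0,T) and s > 0, the defaultable put price satisfies ∂P/∂s(t,s) = Φ(d1(t,s)) − 1, P(t,s) → K·e^{−r(T−t)} as s → 0⁺, and s·∂P/∂s(t,s) + K·e^{−r(T−t)} − P(t,s) = K·e^{−(r+λ)(T−t)}·Φ(d2(t,s)). Hence the put admits exactly the same drift function G(t,s) = (λ̃(t,s) − λ)·K·e^{−(r+λ)(T−t)}·Φ(d2(t,s)) as the call with the same strike and maturity. -/
open Real Filter

/-- Standard normal density `φ`. -/
noncomputable def stdNormalPDF (x : ℝ) : ℝ := Real.exp (-(x ^ 2 / 2)) / Real.sqrt (2 * Real.pi)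

/-- Standard normal cumulative distribution function `Φ`. -/
noncomputable def stdNormalCDF (x : ℝ) : ℝ := ∫ u in Set.Iic x, stdNormalPDF u

/-- `d₁(t,s) = (log(s/K) + (r + λ + σ²/2)(T − t)) / (σ√(T − t))`. -/
noncomputable def d1 (r lam sigma K T t s : ℝ) : ℝ :=
  (Real.log (s / K) + (r + lam + sigma ^ 2 / 2) * (T - t)) / (sigma * Real.sqrt (T - t))

/-- `d₂(t,s) = d₁(t,s) − σ√(T − t)`. -/
noncomputable def d2 (r lam sigma K T t s : ℝ) : ℝ :=
  d1 r lam sigma K T t s - sigma * Real.sqrt (T - t)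

/-- Market price of a European call on a defaultable stock with constant default
intensity `λ`: `C(t,s) = s·Φ(d₁(t,s)) − K·e^{−(r+λ)(T−t)}·Φ(d₂(t,s))`. -/
noncomputable def defaultableCall (r lam sigma K T t s : ℝ) : ℝ :=
  s * stdNormalCDF (d1 r lam sigma K T t s)
    - K * Real.exp (-((r + lam) * (T - t))) * stdNormalCDF (d2 r lam sigma K T t s)

/-- Market price of a European put on a defaultable stock with constant default
intensity `λ`:
`P(t,s) = K·e^{−(r+λ)(T−t)}·Φ(−d₂(t,s)) − s·Φ(−d₁(t,s)) + K·e^{−r(T−t)}(1 − e^{−λ(T−t)})`. -/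
noncomputable def defaultablePut (r lam sigma K T t s : ℝ) : ℝ :=
  K * Real.exp (-((r + lam) * (T - t))) * stdNormalCDF (-(d2 r lam sigma K T t s))
    - s * stdNormalCDF (-(d1 r lam sigma K T t s))
    + K * Real.exp (-(r * (T - t))) * (1 - Real.exp (-(lam * (T - t))))

section AuxNormal
open MeasureTheory

lemma pdf_eq : stdNormalPDF = fun x => Real.exp (-(1/2) * x^2) * (Real.sqrt (2*Real.pi))⁻¹ := by
  funext x; rw [stdNormalPDF, div_eq_mul_inv]; ring_nf

lemma pdf_nonneg (x : ℝ) : 0 ≤ stdNormalPDF x :=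
  div_nonneg (Real.exp_pos _).le (Real.sqrt_nonneg _)

lemma pdf_even (x : ℝ) : stdNormalPDF (-x) = stdNormalPDF x := by
  simp [stdNormalPDF, neg_sq]

lemma pdf_integrable : Integrable stdNormalPDF := by
  rw [pdf_eq]
  exact (integrable_exp_neg_mul_sq (by norm_num : (0:ℝ) < 1/2)).mul_const _

lemma pdf_continuous : Continuous stdNormalPDF := by
  unfold stdNormalPDF; fun_prop

lemma integral_pdf : ∫ x, stdNormalPDF x = 1 := by
  rw [pdf_eq]
  rw [integral_mul_const, integral_gaussian]
  rw [show (π / (1/2) : ℝ) = 2 * π by ring]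
  rw [mul_inv_cancel₀]
  positivity

lemma cdf_le_one (x : ℝ) : stdNormalCDF x ≤ 1 := by
  rw [← integral_pdf]
  exact setIntegral_le_integral pdf_integrable (Eventually.of_forall pdf_nonneg)

lemma cdf_nonneg (x : ℝ) : 0 ≤ stdNormalCDF x :=
  setIntegral_nonneg measurableSet_Iic fun y _ => pdf_nonneg y

lemma cdf_neg (x : ℝ) : stdNormalCDF (-x) = 1 - stdNormalCDF x := by
  have h1 : stdNormalCDF x + ∫ u in Set.Ioi x, stdNormalPDF u = 1 := by
    rw [stdNormalCDF, ← Set.compl_Iic, integral_add_compl measurableSet_Iic pdf_integrable,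
      integral_pdf]
  have h2 : stdNormalCDF (-x) = ∫ u in Set.Ioi x, stdNormalPDF u := by
    rw [stdNormalCDF, ← integral_comp_neg_Ioi]
    simp_rw [pdf_even]
  linarith

lemma cdf_hasDeriv (x : ℝ) : HasDerivAt stdNormalCDF (stdNormalPDF x) x := by
  have key : ∀ y : ℝ, stdNormalCDF y = stdNormalCDF 0 + ∫ u in (0:ℝ)..y, stdNormalPDF u := by
    intro y
    have h := intervalIntegral.integral_Iic_sub_Iic (μ := volume)
      (f := stdNormalPDF) (a := 0) (b := y) pdf_integrable.integrableOn
      pdf_integrable.integrableOn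
    unfold stdNormalCDF
    rw [← h]; ring
  have h : HasDerivAt (fun y => stdNormalCDF 0 + ∫ u in (0:ℝ)..y, stdNormalPDF u)
      (stdNormalPDF x) x := by
    refine (intervalIntegral.integral_hasDerivAt_right
      (pdf_integrable.intervalIntegrable) ?_ pdf_continuous.continuousAt).const_add _
    exact pdf_continuous.aestronglyMeasurable.stronglyMeasurableAtFilter
  exact h.congr_of_eventuallyEq (Eventually.of_forall key)

lemma cdf_mono : Monotone stdNormalCDF := by
  intro x y hxy
  exact setIntegral_mono_set pdf_integrable.integrableOn
    (Eventually.of_forall pdf_nonneg) (Eventually.of_forall (Set.Iic_subset_Iic.2 hxy))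

lemma cdf_tendsto_atTop : Tendsto stdNormalCDF atTop (nhds 1) := by
  rcases tendsto_of_monotone cdf_mono with h | ⟨l, hl⟩
  · exfalso
    obtain ⟨x, hx⟩ := (h.eventually_ge_atTop 2).exists
    linarith [cdf_le_one x]
  · have hseq : Tendsto (fun n : ℕ => stdNormalCDF n) atTop (nhds l) :=
      hl.comp tendsto_natCast_atTop_atTop
    have hseq' : Tendsto (fun n : ℕ => stdNormalCDF n) atTop (nhds 1) := by
      have := tendsto_setIntegral_of_monotone (μ := volume) (f := stdNormalPDF)
        (s := fun n : ℕ => Set.Iic (n:ℝ)) (fun n => measurableSet_Iic)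
        (fun m n h => Set.Iic_subset_Iic.2 (Nat.cast_le.2 h)) pdf_integrable.integrableOn
      have hU : (⋃ n : ℕ, Set.Iic (n:ℝ)) = Set.univ := by
        ext x
        simp only [Set.mem_iUnion, Set.mem_Iic, Set.mem_univ, iff_true]
        exact ⟨⌈x⌉₊, Nat.le_ceil x⟩
      rw [hU, setIntegral_univ, integral_pdf] at this
      exact this
    rwa [tendsto_nhds_unique hseq hseq'] at hl

lemma key_identity (r lam sigma K T t s : ℝ) (hsigma : 0 < sigma) (hK : 0 < K)
    (hτ : 0 < T - t) (hs : 0 < s) :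
    K * Real.exp (-((r + lam) * (T - t))) * stdNormalPDF (d2 r lam sigma K T t s)
      = s * stdNormalPDF (d1 r lam sigma K T t s) := by
  have ha : (0:ℝ) < sigma * Real.sqrt (T - t) := by positivity
  have ha2 : (sigma * Real.sqrt (T - t)) ^ 2 = sigma ^ 2 * (T - t) := by
    rw [mul_pow, Real.sq_sqrt hτ.le]
  have hd1a : d1 r lam sigma K T t s * (sigma * Real.sqrt (T - t))
      = Real.log s - Real.log K + (r + lam + sigma ^ 2 / 2) * (T - t) := by
    rw [d1, div_mul_cancel₀ _ ha.ne', Real.log_div hs.ne' hK.ne']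
  have hexp : K * Real.exp (-((r + lam) * (T - t)))
      * Real.exp (-((d2 r lam sigma K T t s) ^ 2 / 2))
      = s * Real.exp (-((d1 r lam sigma K T t s) ^ 2 / 2)) := by
    have hL : K * Real.exp (-((r + lam) * (T - t)))
        * Real.exp (-((d2 r lam sigma K T t s) ^ 2 / 2))
        = Real.exp (Real.log K + -((r + lam) * (T - t))
          + -((d2 r lam sigma K T t s) ^ 2 / 2)) := by
      rw [Real.exp_add, Real.exp_add, Real.exp_log hK]
    have hR : s * Real.exp (-((d1 r lam sigma K T t s) ^ 2 / 2))
        = Real.exp (Real.log s + -((d1 r lam sigma K T t s) ^ 2 / 2)) := by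
      rw [Real.exp_add, Real.exp_log hs]
    rw [hL, hR]
    congr 1
    rw [d2]
    linear_combination hd1a - ha2 / 2
  have h2 := congrArg (fun z => z / Real.sqrt (2 * Real.pi)) hexp
  simpa only [stdNormalPDF, mul_div_assoc] using h2

lemma d1_hasDerivAt (r lam sigma K T t s : ℝ) (hK : 0 < K) (hs : 0 < s) :
    HasDerivAt (fun x => d1 r lam sigma K T t x)
      (1 / (s * (sigma * Real.sqrt (T - t)))) s := by
  have h0 : HasDerivAt
      (fun x => (Real.log x - Real.log K + (r + lam + sigma ^ 2 / 2) * (T - t))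
        / (sigma * Real.sqrt (T - t)))
      (1 / (s * (sigma * Real.sqrt (T - t)))) s := by
    have h := (((Real.hasDerivAt_log hs.ne').sub_const (Real.log K)).add_const
      ((r + lam + sigma ^ 2 / 2) * (T - t))).div_const (sigma * Real.sqrt (T - t))
    rw [one_div, mul_inv, ← div_eq_mul_inv]
    exact h
  refine h0.congr_of_eventuallyEq ?_
  filter_upwards [eventually_gt_nhds hs] with x hx
  rw [d1, Real.log_div hx.ne' hK.ne']

end AuxNormal

/-- **Drift function of the defaultable put.**
For `t ∈ [0,T)` and `s > 0`: `∂P/∂s(t,s) = Φ(d₁(t,s)) − 1`,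
`P(t,s) → K·e^{−r(T−t)}` as `s → 0⁺`, and
`s·∂P/∂s(t,s) + K·e^{−r(T−t)} − P(t,s) = K·e^{−(r+λ)(T−t)}·Φ(d₂(t,s))`.
Hence the put admits exactly the same drift function
`G(t,s) = (λ̃(t,s) − λ)·K·e^{−(r+λ)(T−t)}·Φ(d₂(t,s))` as the call with the same
strike and maturity. -/
theorem defaultablePut_drift
    (r lam sigma K T : ℝ) (hr : 0 ≤ r) (hlam : 0 ≤ lam) (hsigma : 0 < sigma)
    (hK : 0 < K) (hT : 0 < T) (lamTilde : ℝ → ℝ → ℝ)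
    (t s : ℝ) (ht : t ∈ Set.Ico (0 : ℝ) T) (hs : 0 < s) :
    HasDerivAt (fun x => defaultablePut r lam sigma K T t x)
        (stdNormalCDF (d1 r lam sigma K T t s) - 1) s
    ∧ Tendsto (fun x => defaultablePut r lam sigma K T t x)
        (nhdsWithin 0 (Set.Ioi 0)) (nhds (K * Real.exp (-(r * (T - t)))))
    ∧ s * (stdNormalCDF (d1 r lam sigma K T t s) - 1) + K * Real.exp (-(r * (T - t)))
          - defaultablePut r lam sigma K T t s
        = K * Real.exp (-((r + lam) * (T - t))) * stdNormalCDF (d2 r lam sigma K T t s)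
    ∧ (lamTilde t s - lam)
          * (s * (stdNormalCDF (d1 r lam sigma K T t s) - 1) + K * Real.exp (-(r * (T - t)))
              - defaultablePut r lam sigma K T t s)
        = (lamTilde t s - lam)
          * (s * stdNormalCDF (d1 r lam sigma K T t s) + 0
              - defaultableCall r lam sigma K T t s) := by
  obtain ⟨ht0, htT⟩ := ht
  have hτ : 0 < T - t := sub_pos.2 htT
  have ha : (0:ℝ) < sigma * Real.sqrt (T - t) := by positivity
  have hE : Real.exp (-((r + lam) * (T - t)))
      = Real.exp (-(r * (T - t))) * Real.exp (-(lam * (T - t))) := by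
    rw [← Real.exp_add]; ring_nf
  -- Part 3
  have h3 : s * (stdNormalCDF (d1 r lam sigma K T t s) - 1) + K * Real.exp (-(r * (T - t)))
        - defaultablePut r lam sigma K T t s
      = K * Real.exp (-((r + lam) * (T - t))) * stdNormalCDF (d2 r lam sigma K T t s) := by
    rw [defaultablePut, cdf_neg, cdf_neg, hE]; ring
  -- Part 1: derivative
  have hd1 := d1_hasDerivAt r lam sigma K T t s hK hs
  have hd2 : HasDerivAt (fun x => d2 r lam sigma K T t x)
      (1 / (s * (sigma * Real.sqrt (T - t)))) s := by
    simpa [d2] using hd1.sub_const (sigma * Real.sqrt (T - t))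
  have hDer : HasDerivAt (fun x => defaultablePut r lam sigma K T t x)
      (stdNormalCDF (d1 r lam sigma K T t s) - 1) s := by
    have h2 : HasDerivAt (fun x => stdNormalCDF (-(d2 r lam sigma K T t x)))
        (stdNormalPDF (-(d2 r lam sigma K T t s))
          * -(1 / (s * (sigma * Real.sqrt (T - t))))) s :=
      (cdf_hasDeriv _).comp s hd2.neg
    have h1 : HasDerivAt (fun x => stdNormalCDF (-(d1 r lam sigma K T t x)))
        (stdNormalPDF (-(d1 r lam sigma K T t s))
          * -(1 / (s * (sigma * Real.sqrt (T - t))))) s :=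
      (cdf_hasDeriv _).comp s hd1.neg
    have hmul : HasDerivAt (fun x => x * stdNormalCDF (-(d1 r lam sigma K T t x)))
        (1 * stdNormalCDF (-(d1 r lam sigma K T t s))
          + s * (stdNormalPDF (-(d1 r lam sigma K T t s))
            * -(1 / (s * (sigma * Real.sqrt (T - t)))))) s :=
      (hasDerivAt_id s).mul h1
    have hP := ((h2.const_mul (K * Real.exp (-((r + lam) * (T - t))))).sub hmul).add_const
      (K * Real.exp (-(r * (T - t))) * (1 - Real.exp (-(lam * (T - t)))))
    have heq : K * Real.exp (-((r + lam) * (T - t)))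
          * (stdNormalPDF (-(d2 r lam sigma K T t s))
            * -(1 / (s * (sigma * Real.sqrt (T - t)))))
        - (1 * stdNormalCDF (-(d1 r lam sigma K T t s))
          + s * (stdNormalPDF (-(d1 r lam sigma K T t s))
            * -(1 / (s * (sigma * Real.sqrt (T - t))))))
        = stdNormalCDF (d1 r lam sigma K T t s) - 1 := by
      rw [pdf_even, pdf_even, cdf_neg]
      have hkey := key_identity r lam sigma K T t s hsigma hK hτ hs
      linear_combination (-(1 / (s * (sigma * Real.sqrt (T - t))))) * hkey
    rw [← heq]
    exact hP
  -- Part 2: limit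
  have hlim : Tendsto (fun x => defaultablePut r lam sigma K T t x)
      (nhdsWithin 0 (Set.Ioi 0)) (nhds (K * Real.exp (-(r * (T - t))))) := by
    have hlog : Tendsto (fun x : ℝ => Real.log (x / K)) (nhdsWithin 0 (Set.Ioi 0)) atBot := by
      refine Tendsto.congr' ?_ (tendsto_atBot_add_const_right _ (-Real.log K)
        Real.tendsto_log_nhdsGT_zero)
      filter_upwards [self_mem_nhdsWithin] with x hx
      rw [Real.log_div (ne_of_gt hx) hK.ne', sub_eq_add_neg]
    have hd1bot : Tendsto (fun x => d1 r lam sigma K T t x)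
        (nhdsWithin 0 (Set.Ioi 0)) atBot := by
      have h := (tendsto_atBot_add_const_right _ ((r + lam + sigma ^ 2 / 2) * (T - t))
        hlog).atBot_mul_const (inv_pos.2 ha)
      refine h.congr fun x => ?_
      rw [d1]; ring
    have hnegd2 : Tendsto (fun x => -(d2 r lam sigma K T t x))
        (nhdsWithin 0 (Set.Ioi 0)) atTop := by
      have hneg : Tendsto (fun x => -(d1 r lam sigma K T t x))
          (nhdsWithin 0 (Set.Ioi 0)) atTop := tendsto_neg_atTop_iff.mpr hd1bot
      have h := tendsto_atTop_add_const_right _ (sigma * Real.sqrt (T - t)) hneg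
      refine h.congr fun x => ?_
      rw [d2]; ring
    have hΦ2 : Tendsto (fun x => stdNormalCDF (-(d2 r lam sigma K T t x)))
        (nhdsWithin 0 (Set.Ioi 0)) (nhds 1) := cdf_tendsto_atTop.comp hnegd2
    have hxΦ1 : Tendsto (fun x => x * stdNormalCDF (-(d1 r lam sigma K T t x)))
        (nhdsWithin 0 (Set.Ioi 0)) (nhds 0) := by
      refine squeeze_zero' ?_ ?_ (tendsto_id.mono_left nhdsWithin_le_nhds)
      · filter_upwards [self_mem_nhdsWithin] with x hx
        exact mul_nonneg (le_of_lt hx) (cdf_nonneg _)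
      · filter_upwards [self_mem_nhdsWithin] with x hx
        calc x * stdNormalCDF (-(d1 r lam sigma K T t x)) ≤ x * 1 :=
              mul_le_mul_of_nonneg_left (cdf_le_one _) (le_of_lt hx)
          _ = x := mul_one x
    have hconst : Tendsto (fun _ : ℝ => K * Real.exp (-((r + lam) * (T - t))))
        (nhdsWithin 0 (Set.Ioi 0)) (nhds (K * Real.exp (-((r + lam) * (T - t))))) :=
      tendsto_const_nhds
    have hall := ((hconst.mul hΦ2).sub hxΦ1).add_const
      (K * Real.exp (-(r * (T - t))) * (1 - Real.exp (-(lam * (T - t)))))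
    have hval : K * Real.exp (-((r + lam) * (T - t))) * 1 - 0
        + K * Real.exp (-(r * (T - t))) * (1 - Real.exp (-(lam * (T - t))))
        = K * Real.exp (-(r * (T - t))) := by
      rw [hE]; ring
    rw [← hval]
    exact hall
  refine ⟨hDer, hlim, h3, ?_⟩
  rw [h3, defaultableCall]
  ring
end
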